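/- Let Δ be the block-dephasing map of a projective measurement P. For any density matrix ρ and any block-incoherent density matrix σ (Δ[σ] = σ with σ of full rank or with supp ρ ⊆ supp σ), the quantum relative entropy satisfies S(ρ‖σ) = S(Δ[ρ]) − S(ρ) + S(Δ[ρ]‖σ). Consequently, min over block-incoherent σ of S(ρ‖σ) equals S(Δ[ρ]) − S(ρ), attained at σ = Δ[ρ]. -/

import Mathlib

open Matrix Kronecker Complex ComplexOrder

/-- Von Neumann entropy of a (Hermitian) matrix: S(ρ) = −Σ λ_i log λ_i over the
eigenvalues of ρ. -/
noncomputable def vN {ι : Type*} [Fintype ι] [DecidableEq ι]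
    (ρ : Matrix ι ι ℂ) : ℝ :=
  if h : ρ.IsHermitian then ∑ i, Real.negMulLog (h.eigenvalues i) else 0

/-- Matrix logarithm of a Hermitian matrix, via its spectral decomposition. -/
noncomputable def matLog {d : ℕ} (ρ : Matrix (Fin d) (Fin d) ℂ) :
    Matrix (Fin d) (Fin d) ℂ :=
  if h : ρ.IsHermitian then
    (h.eigenvectorUnitary : Matrix (Fin d) (Fin d) ℂ)
      * Matrix.diagonal (fun i => (Real.log (h.eigenvalues i) : ℂ))
      * (star (h.eigenvectorUnitary : Matrix (Fin d) (Fin d) ℂ))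
  else 0

/-- Quantum relative entropy S(ρ‖σ) = Tr[ρ log ρ − ρ log σ]. -/
noncomputable def relEnt {d : ℕ} (ρ σ : Matrix (Fin d) (Fin d) ℂ) : ℝ :=
  (Matrix.trace (ρ * matLog ρ - ρ * matLog σ)).re

namespace RelEntAux

variable {d : ℕ}

lemma trace_eq_sum_eig {A : Matrix (Fin d) (Fin d) ℂ} (hA : A.IsHermitian) :
    A.trace = ∑ i, (hA.eigenvalues i : ℂ) := by
  conv_lhs => rw [hA.spectral_theorem]
  rw [Unitary.conjStarAlgAut_apply, Matrix.trace_mul_cycle, Unitary.coe_star_mul_self, Matrix.one_mul,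
    Matrix.trace_diagonal]
  rfl

lemma trace_quad (p q : Fin d → ℂ) (W : Matrix (Fin d) (Fin d) ℂ) :
    Matrix.trace (Matrix.diagonal p * (W * Matrix.diagonal q * Wᴴ))
      = ∑ i, ∑ j, p i * q j * (W i j * star (W i j)) := by
  have h1 : ∀ M : Matrix (Fin d) (Fin d) ℂ,
      Matrix.trace (Matrix.diagonal p * M) = ∑ i, p i * M i i := by
    intro M
    simp [Matrix.trace, Matrix.diag, Matrix.mul_apply, Matrix.diagonal_apply, ite_mul]
  rw [h1]
  refine Finset.sum_congr rfl fun i _ => ?_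
  rw [Matrix.mul_apply, Finset.mul_sum]
  refine Finset.sum_congr rfl fun j _ => ?_
  simp only [Matrix.mul_apply, Matrix.diagonal_apply, mul_ite, mul_zero, ite_mul, zero_mul,
    Finset.sum_ite_eq', Finset.mem_univ, if_true, Matrix.conjTranspose_apply, RCLike.star_def]
  ring

lemma trace_mul_log {A B : Matrix (Fin d) (Fin d) ℂ} (hA : A.IsHermitian) (hB : B.IsHermitian) :
    Matrix.trace (A * matLog B)
      = ∑ i, ∑ j, ((hA.eigenvalues i : ℂ) * (Real.log (hB.eigenvalues j) : ℂ))
          * (((star (hA.eigenvectorUnitary : Matrix (Fin d) (Fin d) ℂ)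
              * (hB.eigenvectorUnitary : Matrix (Fin d) (Fin d) ℂ)) i j)
             * star ((star (hA.eigenvectorUnitary : Matrix (Fin d) (Fin d) ℂ)
              * (hB.eigenvectorUnitary : Matrix (Fin d) (Fin d) ℂ)) i j)) := by
  rw [matLog, dif_pos hB]
  set U : Matrix (Fin d) (Fin d) ℂ := (hA.eigenvectorUnitary : Matrix (Fin d) (Fin d) ℂ) with hUdef
  set V : Matrix (Fin d) (Fin d) ℂ := (hB.eigenvectorUnitary : Matrix (Fin d) (Fin d) ℂ) with hVdef
  set L : Matrix (Fin d) (Fin d) ℂ := Matrix.diagonal (fun i => (Real.log (hB.eigenvalues i) : ℂ))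
  set D : Matrix (Fin d) (Fin d) ℂ := Matrix.diagonal (RCLike.ofReal ∘ hA.eigenvalues)
  have hUU : U * star U = 1 := Unitary.coe_mul_star_self _
  have hUU' : star U * U = 1 := Unitary.coe_star_mul_self _
  have hW : (star U * V)ᴴ = star V * U := by
    rw [← Matrix.star_eq_conjTranspose, StarMul.star_mul, star_star]
  have key : A * (V * L * star V)
      = U * (D * ((star U * V) * L * (star U * V)ᴴ)) * star U := by
    conv_lhs => rw [show A = U * D * star U from hA.spectral_theorem]
    rw [hW]
    simp only [Matrix.mul_assoc, hUU, Matrix.mul_one]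
  rw [key, Matrix.trace_mul_cycle, ← Matrix.mul_assoc, hUU', Matrix.one_mul, trace_quad]
  rfl

lemma trace_mul_log_self {A : Matrix (Fin d) (Fin d) ℂ} (hA : A.IsHermitian) :
    Matrix.trace (A * matLog A)
      = ∑ i, ((hA.eigenvalues i : ℂ) * (Real.log (hA.eigenvalues i) : ℂ)) := by
  rw [trace_mul_log hA hA, show star (hA.eigenvectorUnitary : Matrix (Fin d) (Fin d) ℂ)
      * (hA.eigenvectorUnitary : Matrix (Fin d) (Fin d) ℂ) = 1 from
      Unitary.coe_star_mul_self _]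
  refine Finset.sum_congr rfl fun i _ => ?_
  rw [Finset.sum_eq_single i]
  · simp [Matrix.one_apply_eq]
  · intro j _ hj
    simp [Matrix.one_apply_ne' hj]
  · simp

lemma re_trace_mul_log_self {A : Matrix (Fin d) (Fin d) ℂ} (hA : A.IsHermitian) :
    (Matrix.trace (A * matLog A)).re = -vN A := by
  rw [trace_mul_log_self hA, vN, dif_pos hA]
  have h1 : (∑ i, ((hA.eigenvalues i : ℂ) * (Real.log (hA.eigenvalues i) : ℂ)))
      = ((∑ i, hA.eigenvalues i * Real.log (hA.eigenvalues i) : ℝ) : ℂ) := by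
    push_cast; rfl
  rw [h1, Complex.ofReal_re]
  simp [Real.negMulLog, neg_mul, Finset.sum_neg_distrib]

lemma matLog_commute {B M : Matrix (Fin d) (Fin d) ℂ} (hB : B.IsHermitian)
    (h : M * B = B * M) : M * matLog B = matLog B * M := by
  rw [matLog, dif_pos hB]
  set U : Matrix (Fin d) (Fin d) ℂ := (hB.eigenvectorUnitary : Matrix (Fin d) (Fin d) ℂ)
  set L : Matrix (Fin d) (Fin d) ℂ := Matrix.diagonal (fun i => (Real.log (hB.eigenvalues i) : ℂ))
    with hLdef
  set D : Matrix (Fin d) (Fin d) ℂ := Matrix.diagonal (RCLike.ofReal ∘ hB.eigenvalues) with hDdef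
  have hUU : U * star U = 1 := Unitary.coe_mul_star_self _
  have hUU' : star U * U = 1 := Unitary.coe_star_mul_self _
  have cancel1 : ∀ X : Matrix (Fin d) (Fin d) ℂ, star U * (U * X) = X := fun X => by
    rw [← Matrix.mul_assoc, hUU', Matrix.one_mul]
  have cancel2 : ∀ X : Matrix (Fin d) (Fin d) ℂ, U * (star U * X) = X := fun X => by
    rw [← Matrix.mul_assoc, hUU, Matrix.one_mul]
  set N : Matrix (Fin d) (Fin d) ℂ := star U * M * U with hN
  have hM : U * N * star U = M := by
    calc U * (star U * M * U) * star U = U * (star U * (M * (U * star U))) := by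
          simp only [Matrix.mul_assoc]
      _ = M := by rw [hUU, Matrix.mul_one, cancel2]
  have hND : N * D = D * N := by
    have e1 : N * D = star U * (M * B) * U := by
      conv_rhs => rw [show B = U * D * star U from hB.spectral_theorem]
      simp only [hN, Matrix.mul_assoc, hUU', Matrix.mul_one]
    have e2 : D * N = star U * (B * M) * U := by
      conv_rhs => rw [show B = U * D * star U from hB.spectral_theorem]
      simp only [hN, hDdef, Matrix.mul_assoc, cancel1]
    rw [e1, e2, h]
  have hkey : ∀ i j, N i j * (hB.eigenvalues j : ℂ) = (hB.eigenvalues i : ℂ) * N i j := by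
    intro i j
    have := congrFun (congrFun hND i) j
    simpa [hDdef, Matrix.mul_diagonal, Matrix.diagonal_mul, Function.comp] using this
  have hNL : N * L = L * N := by
    ext i j
    rw [Matrix.mul_diagonal, Matrix.diagonal_mul]
    rcases eq_or_ne (hB.eigenvalues i) (hB.eigenvalues j) with heq | hne
    · rw [heq, mul_comm]
    · have hN0 : N i j = 0 := by
        have h2 := hkey i j
        have h3 : N i j * ((hB.eigenvalues j : ℂ) - (hB.eigenvalues i : ℂ)) = 0 := by
          rw [mul_sub, h2]; ring
        rcases mul_eq_zero.mp h3 with h4 | h4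
        · exact h4
        · exfalso
          apply hne
          have := sub_eq_zero.mp h4
          exact_mod_cast this.symm
      simp [hN0]
  calc M * (U * L * star U) = U * (N * L) * star U := by
        rw [← hM]; simp only [Matrix.mul_assoc, cancel1, cancel2]
    _ = U * (L * N) * star U := by rw [hNL]
    _ = (U * L * star U) * M := by
        rw [← hM]; simp only [Matrix.mul_assoc, cancel1, cancel2]

lemma klein_pointwise {c p q : ℝ} (hc : 0 ≤ c) (hp : 0 ≤ p) (hq : 0 ≤ q)
    (h0 : q = 0 → p * c = 0) :
    c * (p - q) ≤ c * (p * Real.log p) - p * Real.log q * c := by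
  rcases eq_or_lt_of_le hp with hp0 | hp0
  · rw [← hp0]
    simp only [zero_sub, mul_zero, zero_mul, sub_zero, mul_neg]
    nlinarith
  rcases eq_or_lt_of_le hq with hq0 | hq0
  · have hpc : p * c = 0 := h0 hq0.symm
    have hc0 : c = 0 := by
      rcases mul_eq_zero.mp hpc with h | h
      · exact absurd h (ne_of_gt hp0)
      · exact h
    simp [hc0]
  · have hlog : Real.log (q / p) ≤ q / p - 1 := Real.log_le_sub_one_of_pos (by positivity)
    rw [Real.log_div (ne_of_gt hq0) (ne_of_gt hp0)] at hlog
    have key : p * Real.log q - p * Real.log p ≤ q - p := by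
      have h2 : p * (Real.log q - Real.log p) ≤ p * (q / p - 1) :=
        mul_le_mul_of_nonneg_left hlog (le_of_lt hp0)
      have h3 : p * (q / p - 1) = q - p := by field_simp
      nlinarith
    nlinarith [mul_le_mul_of_nonneg_left key hc]

lemma sum_mulVec {ι : Type*} [Fintype ι] (A : ι → Matrix (Fin d) (Fin d) ℂ) (v : Fin d → ℂ) :
    (∑ i, A i) *ᵥ v = ∑ i, (A i *ᵥ v) := by
  funext k
  simp only [Matrix.mulVec, dotProduct, Finset.sum_apply, Matrix.sum_apply, Finset.sum_mul]
  exact Finset.sum_comm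

variable {P : Fin n → Matrix (Fin d) (Fin d) ℂ}

lemma proj_comm (horth : ∀ i j, P i * P j = if i = j then P i else 0)
    {τ : Matrix (Fin d) (Fin d) ℂ} (hτ : ∑ i, P i * τ * P i = τ) (k : Fin n) :
    P k * τ = τ * P k := by
  have h1 : P k * τ = P k * τ * P k := by
    conv_lhs => rw [← hτ]
    rw [Finset.mul_sum]
    have e : ∀ i : Fin n, P k * (P i * τ * P i) = if i = k then P k * τ * P k else 0 := by
      intro i
      rcases eq_or_ne i k with h | h
      · subst h
        rw [if_pos rfl]
        calc P i * (P i * τ * P i) = (P i * P i) * τ * P i := by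
              simp only [Matrix.mul_assoc]
          _ = P i * τ * P i := by rw [horth i i, if_pos rfl]
      · rw [if_neg h]
        calc P k * (P i * τ * P i) = (P k * P i) * (τ * P i) := by
              simp only [Matrix.mul_assoc]
          _ = 0 := by rw [horth k i, if_neg (Ne.symm h), Matrix.zero_mul]
    rw [Finset.sum_congr rfl (fun i _ => e i), Finset.sum_ite_eq' Finset.univ k]
    simp
  have h2 : τ * P k = P k * τ * P k := by
    conv_lhs => rw [← hτ]
    rw [Finset.sum_mul]
    have e : ∀ i : Fin n, P i * τ * P i * P k = if i = k then P k * τ * P k else 0 := by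
      intro i
      rcases eq_or_ne i k with h | h
      · subst h
        rw [if_pos rfl, Matrix.mul_assoc, horth i i, if_pos rfl]
      · rw [if_neg h, Matrix.mul_assoc, horth i k, if_neg h, Matrix.mul_zero]
    rw [Finset.sum_congr rfl (fun i _ => e i), Finset.sum_ite_eq' Finset.univ k]
    simp
  rw [h1, h2]

lemma trace_deph (horth : ∀ i j, P i * P j = if i = j then P i else 0)
    (hsum : ∑ i, P i = 1) (ρ L : Matrix (Fin d) (Fin d) ℂ)
    (hcommL : ∀ k, P k * L = L * P k) :
    Matrix.trace ((∑ i, P i * ρ * P i) * L) = Matrix.trace (ρ * L) := by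
  rw [Finset.sum_mul, Matrix.trace_sum]
  have e : ∀ i : Fin n, Matrix.trace (P i * ρ * P i * L) = Matrix.trace (ρ * (L * P i)) := by
    intro i
    have key : P i * ρ * P i * L = P i * (ρ * (L * P i)) := by
      rw [Matrix.mul_assoc (P i * ρ) (P i) L, hcommL i]
      simp only [Matrix.mul_assoc]
    have key2 : (ρ * (L * P i)) * P i = ρ * (L * P i) := by
      calc (ρ * (L * P i)) * P i = ρ * (L * (P i * P i)) := by simp only [Matrix.mul_assoc]
        _ = ρ * (L * P i) := by rw [horth i i, if_pos rfl]
    rw [key, Matrix.trace_mul_comm, key2]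
  rw [Finset.sum_congr rfl (fun i _ => e i), ← Matrix.trace_sum, ← Finset.mul_sum,
    ← Finset.mul_sum, hsum, Matrix.mul_one]

lemma deph_posSemidef (hHerm : ∀ i, (P i).IsHermitian)
    {ρ : Matrix (Fin d) (Fin d) ℂ} (hρ : ρ.PosSemidef) :
    (∑ i, P i * ρ * P i).PosSemidef := by
  refine Finset.sum_induction _ _ (fun a b ha hb => ha.add hb) Matrix.PosSemidef.zero ?_
  intro i _
  have h1 := hρ.mul_mul_conjTranspose_same (P i)
  rwa [(hHerm i).eq] at h1

lemma deph_deph (horth : ∀ i j, P i * P j = if i = j then P i else 0)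
    (ρ : Matrix (Fin d) (Fin d) ℂ) :
    ∑ j, P j * (∑ i, P i * ρ * P i) * P j = ∑ i, P i * ρ * P i := by
  refine Finset.sum_congr rfl fun j _ => ?_
  rw [Finset.mul_sum, Finset.sum_mul]
  have e : ∀ i : Fin n, P j * (P i * ρ * P i) * P j = if i = j then P j * ρ * P j else 0 := by
    intro i
    rcases eq_or_ne i j with h | h
    · subst h
      rw [if_pos rfl]
      calc P i * (P i * ρ * P i) * P i = (P i * P i) * ρ * (P i * P i) := by
            simp only [Matrix.mul_assoc]
        _ = P i * ρ * P i := by rw [horth i i, if_pos rfl]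
    · rw [if_neg h]
      calc P j * (P i * ρ * P i) * P j = ((P j * P i) * (ρ * P i)) * P j := by
            simp only [Matrix.mul_assoc]
        _ = 0 := by rw [horth j i, if_neg (Ne.symm h), Matrix.zero_mul, Matrix.zero_mul]
  rw [Finset.sum_congr rfl (fun i _ => e i), Finset.sum_ite_eq' Finset.univ j]
  simp


lemma klein {ρ σ : Matrix (Fin d) (Fin d) ℂ} (hρ : ρ.PosSemidef) (hσ : σ.PosSemidef)
    (htrρ : ρ.trace = 1) (htrσ : σ.trace = 1)
    (hsupp : ∀ v : Fin d → ℂ, σ *ᵥ v = 0 → ρ *ᵥ v = 0) :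
    (Matrix.trace (ρ * matLog σ)).re ≤ (Matrix.trace (ρ * matLog ρ)).re := by
  have hρ' := hρ.1
  have hσ' := hσ.1
  set p : Fin d → ℝ := hρ'.eigenvalues with hpdef
  set q : Fin d → ℝ := hσ'.eigenvalues with hqdef
  set U : Matrix (Fin d) (Fin d) ℂ := (hρ'.eigenvectorUnitary : Matrix (Fin d) (Fin d) ℂ)
    with hUdef
  set V : Matrix (Fin d) (Fin d) ℂ := (hσ'.eigenvectorUnitary : Matrix (Fin d) (Fin d) ℂ)
    with hVdef
  set W : Matrix (Fin d) (Fin d) ℂ := star U * V with hWdef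
  set c : Fin d → Fin d → ℝ := fun i j => Complex.normSq (W i j) with hcdef
  have hUU : U * star U = 1 := Unitary.coe_mul_star_self _
  have hUU' : star U * U = 1 := Unitary.coe_star_mul_self _
  have hVV : V * star V = 1 := Unitary.coe_mul_star_self _
  have hVV' : star V * V = 1 := Unitary.coe_star_mul_self _
  -- real forms of the two traces
  have hR : (Matrix.trace (ρ * matLog ρ)).re = ∑ i, p i * Real.log (p i) := by
    rw [trace_mul_log_self hρ']
    have h1 : (∑ i, ((p i : ℂ) * (Real.log (p i) : ℂ)))
        = ((∑ i, p i * Real.log (p i) : ℝ) : ℂ) := by push_cast; rfl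
    rw [h1, Complex.ofReal_re]
  have hL : (Matrix.trace (ρ * matLog σ)).re = ∑ i, ∑ j, p i * Real.log (q j) * c i j := by
    rw [trace_mul_log hρ' hσ']
    have h2 : ∀ i j, ((p i : ℂ) * (Real.log (q j) : ℂ)) * (W i j * star (W i j))
        = ((p i * Real.log (q j) * c i j : ℝ) : ℂ) := by
      intro i j
      rw [show star (W i j) = (starRingEnd ℂ) (W i j) from rfl, Complex.mul_conj]
      push_cast
      ring
    refine (congrArg Complex.re (Finset.sum_congr rfl fun i _ =>
      Finset.sum_congr rfl fun j _ => h2 i j)).trans ?_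
    have h3 : (∑ i, ∑ j, ((p i * Real.log (q j) * c i j : ℝ) : ℂ))
        = ((∑ i, ∑ j, p i * Real.log (q j) * c i j : ℝ) : ℂ) := by push_cast; rfl
    rw [h3, Complex.ofReal_re]
  -- double stochasticity
  have hWW : W * Wᴴ = 1 := by
    rw [hWdef, ← Matrix.star_eq_conjTranspose, StarMul.star_mul, star_star]
    have h4 : V * (star V * U) = U := by rw [← Matrix.mul_assoc, hVV, Matrix.one_mul]
    calc star U * V * (star V * U) = star U * (V * (star V * U)) := by
          simp only [Matrix.mul_assoc]
      _ = 1 := by rw [h4, hUU']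
  have hW'W : Wᴴ * W = 1 := by
    rw [hWdef, ← Matrix.star_eq_conjTranspose, StarMul.star_mul, star_star]
    have h4 : U * (star U * V) = V := by rw [← Matrix.mul_assoc, hUU, Matrix.one_mul]
    calc star V * U * (star U * V) = star V * (U * (star U * V)) := by
          simp only [Matrix.mul_assoc]
      _ = 1 := by rw [h4, hVV']
  have hrow : ∀ i, ∑ j, c i j = 1 := by
    intro i
    have h1 : (W * Wᴴ) i i = 1 := by rw [hWW, Matrix.one_apply_eq]
    rw [Matrix.mul_apply] at h1
    have h2 : ∀ j : Fin d, W i j * Wᴴ j i = ((c i j : ℝ) : ℂ) := by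
      intro j
      rw [Matrix.conjTranspose_apply, RCLike.star_def]
      exact Complex.mul_conj _
    rw [Finset.sum_congr rfl (fun j _ => h2 j)] at h1
    exact_mod_cast h1
  have hcol : ∀ j, ∑ i, c i j = 1 := by
    intro j
    have h1 : (Wᴴ * W) j j = 1 := by rw [hW'W, Matrix.one_apply_eq]
    rw [Matrix.mul_apply] at h1
    have h2 : ∀ i : Fin d, Wᴴ j i * W i j = ((c i j : ℝ) : ℂ) := by
      intro i
      rw [Matrix.conjTranspose_apply, RCLike.star_def, mul_comm]
      exact Complex.mul_conj _
    rw [Finset.sum_congr rfl (fun i _ => h2 i)] at h1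
    exact_mod_cast h1
  -- support condition
  have hq0 : ∀ j, q j = 0 → ∀ i, p i * c i j = 0 := by
    intro j hqj i
    have hv : ⇑(hσ'.eigenvectorBasis j) = fun x => V x j := by
      funext x
      exact (hσ'.eigenvectorUnitary_apply x j).symm
    have hσv : σ *ᵥ (fun x => V x j) = 0 := by
      rw [← hv, hσ'.mulVec_eigenvectorBasis, show hσ'.eigenvalues j = q j from rfl, hqj,
        zero_smul]
    have hρv : ρ *ᵥ (fun x => V x j) = 0 := hsupp _ hσv
    have hUv : (star U *ᵥ (fun x => V x j)) = fun i => W i j := by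
      funext k
      simp [hWdef, Matrix.mulVec, Matrix.mul_apply, dotProduct, Matrix.star_apply]
    have hspec : ρ = U * Matrix.diagonal (RCLike.ofReal ∘ p) * star U := hρ'.spectral_theorem
    have hρv2 : (U * Matrix.diagonal (RCLike.ofReal ∘ p) * star U) *ᵥ (fun x => V x j) = 0 := by
      rw [← hspec]; exact hρv
    have e0 : star U * (U * Matrix.diagonal (RCLike.ofReal ∘ p) * star U)
        = Matrix.diagonal (RCLike.ofReal ∘ p) * star U := by
      calc star U * (U * Matrix.diagonal (RCLike.ofReal ∘ p) * star U)
          = (star U * U) * (Matrix.diagonal (RCLike.ofReal ∘ p) * star U) := by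
            simp only [Matrix.mul_assoc]
        _ = Matrix.diagonal (RCLike.ofReal ∘ p) * star U := by rw [hUU', Matrix.one_mul]
    have hDv : (Matrix.diagonal (RCLike.ofReal ∘ p) : Matrix (Fin d) (Fin d) ℂ)
        *ᵥ (fun i => W i j) = 0 := by
      rw [← hUv]
      calc (Matrix.diagonal (RCLike.ofReal ∘ p) : Matrix (Fin d) (Fin d) ℂ)
            *ᵥ (star U *ᵥ (fun x => V x j))
          = (Matrix.diagonal (RCLike.ofReal ∘ p) * star U) *ᵥ (fun x => V x j) :=
            Matrix.mulVec_mulVec _ _ _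
        _ = (star U * (U * Matrix.diagonal (RCLike.ofReal ∘ p) * star U)) *ᵥ (fun x => V x j) := by
            rw [e0]
        _ = star U *ᵥ ((U * Matrix.diagonal (RCLike.ofReal ∘ p) * star U) *ᵥ (fun x => V x j)) :=
            (Matrix.mulVec_mulVec _ _ _).symm
        _ = 0 := by rw [hρv2, Matrix.mulVec_zero]
    have h7 : ((p i : ℂ)) * W i j = 0 := by
      have h8 := congrFun hDv i
      simpa [Matrix.mulVec, dotProduct, Matrix.diagonal_apply, ite_mul, Function.comp]
        using h8
    rcases mul_eq_zero.mp h7 with h | h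
    · have hpi : p i = 0 := by exact_mod_cast h
      rw [hpi, zero_mul]
    · simp [hcdef, h]
  -- eigenvalue sums
  have hsum_p : ∑ i, p i = 1 := by
    have h9 := trace_eq_sum_eig hρ'
    rw [htrρ] at h9
    exact_mod_cast h9.symm
  have hsum_q : ∑ j, q j = 1 := by
    have h9 := trace_eq_sum_eig hσ'
    rw [htrσ] at h9
    exact_mod_cast h9.symm
  -- main chain
  rw [hL, hR]
  have step1 : ∑ i, p i * Real.log (p i) = ∑ i, ∑ j, c i j * (p i * Real.log (p i)) := by
    refine Finset.sum_congr rfl fun i _ => ?_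
    rw [← Finset.sum_mul, hrow i, one_mul]
  have step2 : (0:ℝ) = ∑ i, ∑ j, c i j * (p i - q j) := by
    have e : ∀ i, ∑ j, c i j * (p i - q j) = p i - ∑ j, c i j * q j := by
      intro i
      simp only [mul_sub]
      rw [Finset.sum_sub_distrib, ← Finset.sum_mul, hrow i, one_mul]
    rw [Finset.sum_congr rfl (fun i _ => e i), Finset.sum_sub_distrib, hsum_p]
    rw [Finset.sum_comm]
    have h10 : ∑ j, ∑ i, c i j * q j = ∑ j : Fin d, q j := by
      refine Finset.sum_congr rfl fun j _ => ?_
      rw [← Finset.sum_mul, hcol j, one_mul]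
    rw [h10, hsum_q, sub_self]
  have step3 : ∀ i j, c i j * (p i - q j)
      ≤ c i j * (p i * Real.log (p i)) - p i * Real.log (q j) * c i j := fun i j =>
    klein_pointwise (Complex.normSq_nonneg _) (hρ.eigenvalues_nonneg i)
      (hσ.eigenvalues_nonneg j) (fun h => hq0 j h i)
  have h8 : ∑ i, ∑ j, (c i j * (p i - q j))
      ≤ ∑ i, ∑ j, (c i j * (p i * Real.log (p i)) - p i * Real.log (q j) * c i j) :=
    Finset.sum_le_sum fun i _ => Finset.sum_le_sum fun j _ => step3 i j
  rw [← step2] at h8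
  simp only [Finset.sum_sub_distrib] at h8
  rw [step1]
  linarith

end RelEntAux


/-- For any density matrix ρ and any block-incoherent density
matrix σ with supp ρ ⊆ supp σ, S(ρ‖σ) = S(Δ[ρ]) − S(ρ) + S(Δ[ρ]‖σ).
Consequently the minimum of S(ρ‖σ) over block-incoherent σ equals
S(Δ[ρ]) − S(ρ), attained at σ = Δ[ρ]. -/
theorem relEnt_block_coherence (d n : ℕ)
    (P : Fin n → Matrix (Fin d) (Fin d) ℂ)
    (hHerm : ∀ i, (P i).IsHermitian)
    (horth : ∀ i j, P i * P j = if i = j then P i else 0)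
    (hsum : ∑ i, P i = 1)
    (ρ : Matrix (Fin d) (Fin d) ℂ) (hρ : ρ.PosSemidef) (htrρ : ρ.trace = 1)
    (σ : Matrix (Fin d) (Fin d) ℂ) (hσ : σ.PosSemidef) (htrσ : σ.trace = 1)
    (hinc : (∑ i, P i * σ * P i) = σ)
    (hsupp : ∀ v : Fin d → ℂ, σ *ᵥ v = 0 → ρ *ᵥ v = 0) :
    relEnt ρ σ = vN (∑ i, P i * ρ * P i) - vN ρ + relEnt (∑ i, P i * ρ * P i) σ ∧
    relEnt ρ (∑ i, P i * ρ * P i) = vN (∑ i, P i * ρ * P i) - vN ρ ∧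
    vN (∑ i, P i * ρ * P i) - vN ρ ≤ relEnt ρ σ := by
  classical
  set Δρ : Matrix (Fin d) (Fin d) ℂ := ∑ i, P i * ρ * P i with hΔdef
  -- basic properties of Δρ
  have hΔpsd : Δρ.PosSemidef := RelEntAux.deph_posSemidef hHerm hρ
  have hΔinc : ∑ j, P j * Δρ * P j = Δρ := RelEntAux.deph_deph horth ρ
  have hΔtr : Δρ.trace = 1 := by
    have h1 := RelEntAux.trace_deph horth hsum ρ (1 : Matrix (Fin d) (Fin d) ℂ)
      (fun k => by rw [Matrix.mul_one, Matrix.one_mul])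
    rwa [Matrix.mul_one, Matrix.mul_one, htrρ] at h1
  -- commutation of blocks with σ and Δρ, hence with their logs
  have hcommσ : ∀ k, P k * σ = σ * P k := fun k => RelEntAux.proj_comm horth hinc k
  have hcommΔ : ∀ k, P k * Δρ = Δρ * P k := fun k => RelEntAux.proj_comm horth hΔinc k
  have hLσ : ∀ k, P k * matLog σ = matLog σ * P k :=
    fun k => RelEntAux.matLog_commute hσ.1 (hcommσ k)
  have hLΔ : ∀ k, P k * matLog Δρ = matLog Δρ * P k :=
    fun k => RelEntAux.matLog_commute hΔpsd.1 (hcommΔ k)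
  -- trace identities
  have t1 : Matrix.trace (Δρ * matLog σ) = Matrix.trace (ρ * matLog σ) :=
    RelEntAux.trace_deph horth hsum ρ (matLog σ) hLσ
  have t2 : Matrix.trace (Δρ * matLog Δρ) = Matrix.trace (ρ * matLog Δρ) :=
    RelEntAux.trace_deph horth hsum ρ (matLog Δρ) hLΔ
  -- support condition for Δρ
  have hsuppΔ : ∀ v : Fin d → ℂ, σ *ᵥ v = 0 → Δρ *ᵥ v = 0 := by
    intro v hv
    have hk : ∀ k, (P k * ρ * P k) *ᵥ v = 0 := by
      intro k
      have h1 : σ *ᵥ (P k *ᵥ v) = 0 := by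
        rw [Matrix.mulVec_mulVec, ← hcommσ k, ← Matrix.mulVec_mulVec, hv, Matrix.mulVec_zero]
      have h2 := hsupp _ h1
      calc (P k * ρ * P k) *ᵥ v = P k *ᵥ (ρ *ᵥ (P k *ᵥ v)) := by
            rw [Matrix.mulVec_mulVec, Matrix.mulVec_mulVec]
        _ = 0 := by rw [h2, Matrix.mulVec_zero]
    rw [hΔdef, RelEntAux.sum_mulVec]
    simp only [hk, Finset.sum_const_zero]
  -- Klein inequality for (Δρ, σ)
  have hklein := RelEntAux.klein hΔpsd hσ hΔtr htrσ hsuppΔ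
  -- real reformulations
  have hself_ρ : (Matrix.trace (ρ * matLog ρ)).re = -vN ρ :=
    RelEntAux.re_trace_mul_log_self hρ.1
  have hself_Δ : (Matrix.trace (Δρ * matLog Δρ)).re = -vN Δρ :=
    RelEntAux.re_trace_mul_log_self hΔpsd.1
  have hre1 : relEnt ρ σ = -vN ρ - (Matrix.trace (ρ * matLog σ)).re := by
    rw [relEnt, Matrix.trace_sub, Complex.sub_re, hself_ρ]
  have hre2 : relEnt Δρ σ = -vN Δρ - (Matrix.trace (ρ * matLog σ)).re := by
    rw [relEnt, Matrix.trace_sub, Complex.sub_re, hself_Δ, t1]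
  have hre3 : relEnt ρ Δρ = -vN ρ - (Matrix.trace (Δρ * matLog Δρ)).re := by
    rw [relEnt, Matrix.trace_sub, Complex.sub_re, hself_ρ, ← t2]
  have hre4 : (Matrix.trace (Δρ * matLog σ)).re = (Matrix.trace (ρ * matLog σ)).re := by
    rw [t1]
  rw [hre4] at hklein
  rw [hself_Δ] at hklein
  refine ⟨by rw [hre1, hre2]; ring, by rw [hre3, hself_Δ]; ring, ?_⟩
  rw [hre1]
  linarith
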